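/- Assume additionally that ζ²(a+ib) is real and strictly positive, and let α > 0 be the positive real number with α² = W²·ζ²(a+ib), μ = √(π/(W²ζ² + α)) (principal branch) and g_α(x) = (2α/π)^{1/4}·exp(−αx²). Then for every 0 < ε < 1 there exist constants C_ε, W₀ (depending on a, b, ζ, ε) such that for all W ≥ W₀, ‖K_hr g_α − μ·g_α‖_{L²(ℝ)} ≤ C_ε·|μ|·W^{−2+2ε}. -/

import Mathlib

open MeasureTheory Complex Real
open scoped ComplexInnerProductSpace ENNReal NNReal

noncomputable section

/-- The Hilbert space `L²(ℝ, ℂ)`. -/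
abbrev Hsp : Type := Lp ℂ 2 (volume : Measure ℝ)

/-- `T` is the integral operator on `L²(ℝ)` with kernel `k`. -/
def IsKerOp (k : ℝ → ℝ → ℂ) (T : Hsp →L[ℂ] Hsp) : Prop :=
  ∀ f : Hsp, ∀ᵐ x : ℝ, (T f : ℝ → ℂ) x = ∫ y : ℝ, k x y * (f : ℝ → ℂ) y

/-- The harmonic-oscillator kernel
`K_hr(x,y) = exp(−W²ζ²(x−y)² − ((a+ib)/2)(x²+y²))`. -/
def kerHr (W : ℝ) (ζ : ℂ) (a b : ℝ) (x y : ℝ) : ℂ :=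
  Complex.exp (-(W : ℂ)^2 * ζ^2 * ((x : ℂ) - (y : ℂ))^2
    - (((a : ℂ) + (b : ℂ) * Complex.I) / 2) * ((x : ℂ)^2 + (y : ℂ)^2))

/-- The eigenvalues `λ_j^hr` of the harmonic oscillator (principal square root). -/
def lamHr (W : ℝ) (ζ : ℂ) (a b : ℝ) (αhr : ℂ) (j : ℕ) : ℂ :=
  ((π : ℂ) / ((W : ℂ)^2 * ζ^2 + αhr + ((a : ℂ) + (b : ℂ) * Complex.I) / 2)) ^ (1/2 : ℂ) *
    (((W : ℂ)^2 * ζ^2) / ((W : ℂ)^2 * ζ^2 + αhr + ((a : ℂ) + (b : ℂ) * Complex.I) / 2)) ^ j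

/-- The squared singular values `(s_j^hr)²` of the harmonic oscillator, where
`A = 2W²·Re ζ² + a`. -/
def ssqHr (W a A : ℝ) (j : ℕ) : ℝ :=
  Real.sqrt (π^2 / (W^4 + 2*a*A + Real.sqrt ((2*W^4 + a*A) * (a*A)))) *
    (W^4 / (W^4 + 2*a*A + Real.sqrt ((2*W^4 + a*A) * (a*A)))) ^ j

/-- The (complex) Gaussian `g_α(x) = (2α/π)^{1/4}·exp(−αx²)`, principal branch. -/
def gaussC (α : ℂ) (x : ℝ) : ℂ :=
  (2 * α / (π : ℂ)) ^ (1/4 : ℂ) * Complex.exp (-α * (x : ℂ)^2)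

end

section Aux

/-- `|exp w − 1| ≤ ‖w‖·e^{‖w‖}`. -/
lemma aux_exp_sub_one (w : ℂ) : ‖Complex.exp w - 1‖ ≤ ‖w‖ * Real.exp ‖w‖ := by
  have hw : w ∈ Metric.closedBall (0:ℂ) ‖w‖ := Metric.mem_closedBall.2 (by simp)
  have h0 : (0:ℂ) ∈ Metric.closedBall (0:ℂ) ‖w‖ := Metric.mem_closedBall_self (norm_nonneg w)
  have h := (convex_closedBall (0:ℂ) ‖w‖).norm_image_sub_le_of_norm_hasDerivWithin_le
    (f := Complex.exp) (f' := Complex.exp) (C := Real.exp ‖w‖)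
    (fun z _ => (Complex.hasDerivAt_exp z).hasDerivWithinAt)
    (fun z hz => by
      rw [Complex.norm_exp]
      refine Real.exp_le_exp.2 ((Complex.re_le_norm z).trans ?_)
      simpa using Metric.mem_closedBall.1 hz)
    h0 hw
  simpa [Complex.exp_zero, mul_comm] using h

lemma aux_re_sqrt {z : ℂ} (hz : 0 ≤ z.re) (h0 : z ≠ 0) :
    Real.sqrt 2 / 2 * Real.sqrt (‖z‖) ≤ (z ^ (1/2:ℂ)).re := by
  have habs : 0 < ‖z‖ := norm_pos_iff.mpr h0
  rw [Complex.cpow_def_of_ne_zero h0, Complex.exp_re]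
  have hre : (Complex.log z * (1/2:ℂ)).re = Real.log (‖z‖) * (1/2) := by
    simp [Complex.mul_re, Complex.log_re, Complex.log_im]
  have him : (Complex.log z * (1/2:ℂ)).im = Complex.arg z * (1/2) := by
    simp [Complex.mul_im, Complex.log_re, Complex.log_im]
  rw [hre, him]
  have hexp : Real.exp (Real.log (‖z‖) * (1/2)) = Real.sqrt (‖z‖) := by
    rw [Real.sqrt_eq_rpow, Real.rpow_def_of_pos habs]
  rw [hexp]
  have harg : |Complex.arg z| ≤ π / 2 := Complex.abs_arg_le_pi_div_two_iff.2 hz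
  have hcos : Real.sqrt 2 / 2 ≤ Real.cos (Complex.arg z * (1/2)) := by
    rw [← Real.cos_pi_div_four, ← Real.cos_abs (Complex.arg z * (1/2))]
    apply Real.cos_le_cos_of_nonneg_of_le_pi (abs_nonneg _)
    · linarith [Real.pi_pos]
    · rw [abs_mul]
      have : |(1/2 : ℝ)| = 1/2 := by norm_num
      rw [this]
      nlinarith [Real.pi_pos]
  calc Real.sqrt 2 / 2 * Real.sqrt (‖z‖)
      ≤ Real.cos (Complex.arg z * (1/2)) * Real.sqrt (‖z‖) :=
        mul_le_mul_of_nonneg_right hcos (Real.sqrt_nonneg _)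
    _ = Real.sqrt (‖z‖) * Real.cos (Complex.arg z * (1/2)) := mul_comm _ _

lemma aux_sq_sqrt {z : ℂ} (h0 : z ≠ 0) : z ^ (1/2:ℂ) * z ^ (1/2:ℂ) = z := by
  rw [← Complex.cpow_add _ _ h0]; norm_num

lemma aux_abs_sqrt (z : ℂ) : ‖z ^ (1/2:ℂ)‖ = Real.sqrt (‖z‖) := by
  have : (1/2 : ℂ) = ((1/2 : ℝ) : ℂ) := by norm_num
  rw [this, Complex.norm_cpow_real, Real.sqrt_eq_rpow]

lemma aux_sqrt_diff {z w : ℂ} (hz : 0 < z.re) (hz0 : z ≠ 0) (hw : 0 ≤ w.re) (hw0 : w ≠ 0) :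
    ‖z ^ (1/2:ℂ) - w ^ (1/2:ℂ)‖ ≤ ‖z - w‖ * (Real.sqrt 2 / Real.sqrt (‖z‖)) := by
  set u := z ^ (1/2:ℂ) with hu
  set v := w ^ (1/2:ℂ) with hv
  have habs : 0 < Real.sqrt (‖z‖) := Real.sqrt_pos.2 (norm_pos_iff.mpr hz0)
  have hsum : Real.sqrt 2 / 2 * Real.sqrt (‖z‖) ≤ ‖u + v‖ := by
    have h1 := aux_re_sqrt hz.le hz0
    have h2 := aux_re_sqrt hw hw0
    have h3 : Real.sqrt 2 / 2 * Real.sqrt (‖w‖) ≥ 0 := by positivity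
    calc Real.sqrt 2 / 2 * Real.sqrt (‖z‖) ≤ (u + v).re := by
          rw [Complex.add_re]; nlinarith
      _ ≤ ‖u + v‖ := Complex.re_le_norm _
  have hmul : (u - v) * (u + v) = z - w := by
    have h1 : u * u = z := aux_sq_sqrt hz0
    have h2 : v * v = w := aux_sq_sqrt hw0
    ring_nf
    linear_combination h1 - h2
  have hsumpos : 0 < ‖u + v‖ := lt_of_lt_of_le (by positivity) hsum
  have key : ‖u - v‖ * ‖u + v‖ = ‖z - w‖ := by
    rw [← norm_mul, hmul]
  have h22 : Real.sqrt 2 * Real.sqrt 2 = 2 := Real.mul_self_sqrt (by norm_num)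
  have heq : ‖u - v‖ = ‖z - w‖ / ‖u + v‖ := by
    rw [eq_div_iff hsumpos.ne']; exact key
  rw [heq]
  have hb : ‖z - w‖ / ‖u + v‖ ≤ ‖z - w‖ / (Real.sqrt 2 / 2 * Real.sqrt (‖z‖)) :=
    div_le_div_of_nonneg_left (norm_nonneg _) (by positivity) hsum
  refine hb.trans (le_of_eq ?_)
  rw [div_eq_mul_inv, div_eq_mul_inv]
  congr 1
  rw [inv_eq_iff_eq_inv, inv_div]
  have h2pos : (0:ℝ) < Real.sqrt 2 := by positivity
  field_simp
  linear_combination h22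

lemma aux_norm_le (f : Lp ℂ 2 (volume : Measure ℝ)) (φ : ℝ → ℂ)
    (hf : (f : ℝ → ℂ) =ᵐ[volume] φ) (E t : ℝ) (hE : 0 ≤ E) (ht : 0 < t)
    (hb : ∀ x : ℝ, ‖φ x‖ ≤ E * Real.exp (-(t * x^2))) :
    ‖f‖ ≤ E * Real.sqrt (Real.sqrt (π / (2*t))) := by
  set M : ℝ → ℝ := fun x => E * Real.exp (-(t * x^2)) with hM
  have hint : Integrable (fun x : ℝ => E^2 * Real.exp (-(2*t) * x^2)) volume :=
    (integrable_exp_neg_mul_sq (by positivity)).const_mul _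
  have hM2 : ∀ x : ℝ, (‖M x‖₊ : ℝ≥0∞) ^ (2:ℝ) =
      ENNReal.ofReal (E^2 * Real.exp (-(2*t) * x^2)) := by
    intro x
    have hnn : 0 ≤ M x := by positivity
    rw [← enorm_eq_nnnorm, ← ofReal_norm, Real.norm_of_nonneg hnn,
      ENNReal.ofReal_rpow_of_nonneg hnn (by norm_num)]
    congr 1
    have h2 : ((2:ℕ):ℝ) = (2:ℝ) := by norm_num
    rw [← h2, Real.rpow_natCast]
    rw [hM, mul_pow, sq (Real.exp _), ← Real.exp_add]
    congr 1
    ring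
  have hlint : ∫⁻ x, (‖M x‖₊ : ℝ≥0∞) ^ (2:ℝ) =
      ENNReal.ofReal (E^2 * Real.sqrt (π/(2*t))) := by
    simp_rw [hM2]
    rw [← ofReal_integral_eq_lintegral_ofReal hint
      (Filter.Eventually.of_forall fun x => by positivity)]
    congr 1
    rw [integral_const_mul, integral_gaussian]
  have help : eLpNorm M 2 volume = ENNReal.ofReal (E * Real.sqrt (Real.sqrt (π/(2*t)))) := by
    rw [eLpNorm_eq_lintegral_rpow_enorm_toReal two_ne_zero ENNReal.ofNat_ne_top]
    simp only [ENNReal.toReal_ofNat, enorm_eq_nnnorm]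
    rw [hlint, ENNReal.ofReal_rpow_of_nonneg (by positivity) (by norm_num)]
    congr 1
    rw [← Real.sqrt_eq_rpow, Real.sqrt_mul (sq_nonneg E), Real.sqrt_sq hE]
  have hle : eLpNorm (f : ℝ → ℂ) 2 volume ≤ eLpNorm M 2 volume := by
    rw [eLpNorm_congr_ae hf]
    exact eLpNorm_mono_ae_real (Filter.Eventually.of_forall hb)
  rw [Lp.norm_def]
  calc (eLpNorm (f : ℝ → ℂ) 2 volume).toReal ≤ (eLpNorm M 2 volume).toReal :=
        ENNReal.toReal_mono (by rw [help]; exact ENNReal.ofReal_ne_top) hle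
    _ = E * Real.sqrt (Real.sqrt (π/(2*t))) := by
        rw [help, ENNReal.toReal_ofReal (by positivity)]

lemma aux_exp_eq {c d α s : ℂ} (hs : s = c + d + α) (hs0 : s ≠ 0)
    (hα2 : α^2 = c * (2*d)) (X : ℂ) :
    -(c+d)*X^2 - (2*c*X)^2/(4*(-s)) = -(α + d^2/s) * X^2 := by
  have h1 : (2*c*X)^2/(4*(-s)) = -(c^2*X^2/s) := by
    rw [mul_neg, div_neg]
    congr 1
    rw [div_eq_div_iff (mul_ne_zero (by norm_num) hs0) hs0]
    ring
  rw [h1, sub_neg_eq_add]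
  subst hs
  field_simp [hs0]
  linear_combination (X^2) * hα2

lemma aux_integral (W : ℝ) (ζ : ℂ) (a b α : ℝ) (c d s : ℂ)
    (hc : c = (W:ℂ)^2 * ζ^2) (hd : d = ((a:ℂ) + (b:ℂ)*Complex.I)/2)
    (hs : s = c + d + (α:ℂ)) (hsre : 0 < s.re) (hα2 : ((α:ℂ))^2 = c * (2*d)) (x : ℝ) :
    ∫ y : ℝ, kerHr W ζ a b x y * gaussC (α:ℂ) y =
      (2*(α:ℂ)/(π:ℂ))^(1/4:ℂ) *
        (((π:ℂ)/s)^(1/2:ℂ) * Complex.exp (-((α:ℂ) + d^2/s) * (x:ℂ)^2)) := by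
  have hs0 : s ≠ 0 := fun h => by simp [h] at hsre
  have hpt : ∀ y : ℝ, kerHr W ζ a b x y * gaussC (α:ℂ) y =
      (2*(α:ℂ)/(π:ℂ))^(1/4:ℂ) *
        Complex.exp ((-s) * (y:ℂ)^2 + (2*c*(x:ℂ)) * (y:ℂ) + (-(c+d)*(x:ℂ)^2)) := by
    intro y
    rw [kerHr, gaussC, mul_left_comm, ← Complex.exp_add]
    congr 2
    subst hc hd hs
    ring
  simp only [hpt]
  rw [integral_const_mul, integral_cexp_quadratic (show (-s).re < 0 by simpa), neg_neg,
    aux_exp_eq hs hs0 hα2 (x:ℂ)]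

lemma aux_ratio (A B σ2 nd : ℝ) (hA : 0 < A) (hB : 0 < B) (hσ : 0 < σ2) (hnd : 0 ≤ nd)
    (h1 : σ2 ≤ A) (h2 : σ2 ≤ B) :
    π*nd/(A*B) * (Real.sqrt 2/(Real.sqrt π/Real.sqrt A)) ≤
      Real.sqrt π/Real.sqrt B * (Real.sqrt 2 * nd/σ2) := by
  have hsA : 0 < Real.sqrt A := Real.sqrt_pos.2 hA
  have hsB : 0 < Real.sqrt B := Real.sqrt_pos.2 hB
  have hsπ : 0 < Real.sqrt π := Real.sqrt_pos.2 Real.pi_pos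
  have hAA : Real.sqrt A^2 = A := Real.sq_sqrt hA.le
  have hBB : Real.sqrt B^2 = B := Real.sq_sqrt hB.le
  have hππ : Real.sqrt π^2 = π := Real.sq_sqrt Real.pi_pos.le
  have key : Real.sqrt B * σ2 ≤ Real.sqrt A * B := by
    have h3 : σ2 ≤ Real.sqrt A * Real.sqrt B := by
      calc σ2 = Real.sqrt σ2 * Real.sqrt σ2 := (Real.mul_self_sqrt hσ.le).symm
        _ ≤ Real.sqrt A * Real.sqrt B :=
          mul_le_mul (Real.sqrt_le_sqrt h1) (Real.sqrt_le_sqrt h2)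
            (Real.sqrt_nonneg _) hsA.le
    nlinarith [h3, hsB, hBB]
  calc π*nd/(A*B) * (Real.sqrt 2/(Real.sqrt π/Real.sqrt A))
      = Real.sqrt 2 * Real.sqrt π * nd / (Real.sqrt A * B) := by
        field_simp
        rw [hAA, hππ]; ring
    _ ≤ Real.sqrt 2 * Real.sqrt π * nd / (Real.sqrt B * σ2) := by
        apply div_le_div_of_nonneg_left (by positivity) (by positivity) key
    _ = Real.sqrt π/Real.sqrt B * (Real.sqrt 2 * nd/σ2) := by
        field_simp

lemma aux_ptbound (Cc ν μ δ : ℂ) (α Tν : ℝ) (hα : 0 < α)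
    (hδα : ‖δ‖ ≤ α/4) (hν : ‖ν‖ ≤ 2*Tν) (x : ℝ) :
    ‖Cc * Complex.exp (-(α:ℂ)*(x:ℂ)^2) * (ν * Complex.exp (-δ*(x:ℂ)^2) - μ)‖
      ≤ (‖Cc‖ * (‖ν - μ‖ + 8*Tν*‖δ‖/α)) * Real.exp (-(α/2 * x^2)) := by
  have hTν : 0 ≤ Tν := by nlinarith [norm_nonneg ν]
  have he1 : ‖Complex.exp (-(α:ℂ)*(x:ℂ)^2)‖ = Real.exp (-(α*x^2)) := by
    rw [Complex.norm_exp,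
      show -(α:ℂ)*(x:ℂ)^2 = ((-(α*x^2):ℝ):ℂ) by push_cast; ring, Complex.ofReal_re]
  have hx2 : x^2 ≤ 4/α * Real.exp (α/4*x^2) := by
    rw [div_mul_eq_mul_div, le_div_iff₀ hα]
    nlinarith [Real.add_one_le_exp (α/4*x^2)]
  have hδx : ‖δ‖*x^2 ≤ α/4*x^2 := by nlinarith [sq_nonneg x]
  have h6 : ‖Complex.exp (-δ*(x:ℂ)^2) - 1‖ ≤ ‖δ‖*x^2 * Real.exp (α/4*x^2) := by
    have h := aux_exp_sub_one (-δ*(x:ℂ)^2)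
    have hn : ‖-δ*(x:ℂ)^2‖ = ‖δ‖*x^2 := by
      rw [norm_mul, norm_neg, norm_pow, Complex.norm_real, Real.norm_eq_abs, _root_.sq_abs x]
    rw [hn] at h
    refine h.trans ?_
    gcongr
  have hmain : ‖ν * Complex.exp (-δ*(x:ℂ)^2) - μ‖
      ≤ (‖ν-μ‖ + 8*Tν*‖δ‖/α) * Real.exp (α/2*x^2) := by
    have split : ν * Complex.exp (-δ*(x:ℂ)^2) - μ
        = ν * (Complex.exp (-δ*(x:ℂ)^2) - 1) + (ν - μ) := by ring
    rw [split]
    refine (norm_add_le _ _).trans ?_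
    rw [norm_mul]
    have e1 : ‖ν‖ * ‖Complex.exp (-δ*(x:ℂ)^2) - 1‖
        ≤ (2*Tν) * (‖δ‖*x^2 * Real.exp (α/4*x^2)) :=
      mul_le_mul hν h6 (norm_nonneg _) (by positivity)
    have e2 : ‖δ‖*x^2 * Real.exp (α/4*x^2)
        ≤ ‖δ‖*(4/α * Real.exp (α/4*x^2)) * Real.exp (α/4*x^2) := by
      gcongr
    have e3 : Real.exp (α/4*x^2) * Real.exp (α/4*x^2) = Real.exp (α/2*x^2) := by
      rw [← Real.exp_add]; ring_nf
    have e4 : 1 ≤ Real.exp (α/2*x^2) := Real.one_le_exp (by positivity)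
    calc ‖ν‖ * ‖Complex.exp (-δ*(x:ℂ)^2) - 1‖ + ‖ν - μ‖
        ≤ (2*Tν)*(‖δ‖*(4/α * Real.exp (α/4*x^2)) * Real.exp (α/4*x^2))
            + ‖ν-μ‖*Real.exp (α/2*x^2) := by
          refine add_le_add (e1.trans ?_) (le_mul_of_one_le_right (norm_nonneg _) e4)
          gcongr
      _ = (‖ν-μ‖ + 8*Tν*‖δ‖/α) * Real.exp (α/2*x^2) := by
          have h7 : (2*Tν)*(‖δ‖*(4/α * Real.exp (α/4*x^2)) * Real.exp (α/4*x^2))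
              = 8*Tν*‖δ‖/α * (Real.exp (α/4*x^2) * Real.exp (α/4*x^2)) := by ring
          rw [h7, e3]; ring
  have e5 : Real.exp (-(α*x^2)) * Real.exp (α/2*x^2) = Real.exp (-(α/2*x^2)) := by
    rw [← Real.exp_add]; ring_nf
  calc ‖Cc * Complex.exp (-(α:ℂ)*(x:ℂ)^2) * (ν * Complex.exp (-δ*(x:ℂ)^2) - μ)‖
      = ‖Cc‖ * (‖Complex.exp (-(α:ℂ)*(x:ℂ)^2)‖ * ‖ν * Complex.exp (-δ*(x:ℂ)^2) - μ‖) := by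
        rw [norm_mul, norm_mul, mul_assoc]
    _ ≤ ‖Cc‖ * (Real.exp (-(α*x^2)) * ((‖ν-μ‖ + 8*Tν*‖δ‖/α) * Real.exp (α/2*x^2))) := by
        rw [he1]
        gcongr
    _ = (‖Cc‖ * (‖ν - μ‖ + 8*Tν*‖δ‖/α)) * (Real.exp (-(α*x^2)) * Real.exp (α/2*x^2)) := by ring
    _ = (‖Cc‖ * (‖ν - μ‖ + 8*Tν*‖δ‖/α)) * Real.exp (-(α/2 * x^2)) := by rw [e5]

lemma aux_sq2 : Real.sqrt (Real.sqrt 2) ≤ 2 := by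
  have h1 : Real.sqrt 2 ≤ 2 := by
    nlinarith [Real.sq_sqrt (by norm_num : (0:ℝ) ≤ 2), Real.sqrt_nonneg 2]
  exact le_trans (Real.sqrt_le_sqrt h1) h1

end Aux

set_option maxHeartbeats 2000000 in
theorem stmt_10 :
    ∀ (ζ : ℂ) (a b : ℝ), ‖ζ‖ = 1 → 0 < (ζ^2).re → 0 < a →
    (ζ^2 * ((a : ℂ) + (b : ℂ) * Complex.I)).im = 0 →
    0 < (ζ^2 * ((a : ℂ) + (b : ℂ) * Complex.I)).re →
    ∀ ε : ℝ, 0 < ε → ε < 1 →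
    ∃ Cε : ℝ, 0 < Cε ∧ ∃ W₀ : ℝ, 0 < W₀ ∧
    ∀ W : ℝ, W₀ ≤ W →
    ∀ α : ℝ, 0 < α → ((α : ℂ))^2 = (W : ℂ)^2 * ζ^2 * ((a : ℂ) + (b : ℂ) * Complex.I) →
    ∀ Khr : Hsp →L[ℂ] Hsp, IsKerOp (kerHr W ζ a b) Khr →
    ∀ g : Hsp, (∀ᵐ x : ℝ, (g : ℝ → ℂ) x = gaussC (α : ℂ) x) →
      ‖Khr g - (((π : ℂ) / ((W : ℂ)^2 * ζ^2 + (α : ℂ))) ^ (1/2 : ℂ)) • g‖ ≤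
        Cε * ‖((π : ℂ) / ((W : ℂ)^2 * ζ^2 + (α : ℂ))) ^ (1/2 : ℂ)‖ * W ^ (-2 + 2*ε) := by
  intro ζ a b hζ hρ ha him hre ε hε hε1
  set ρ : ℝ := (ζ^2).re with hρdef
  set r : ℝ := (ζ^2 * ((a:ℂ) + (b:ℂ)*Complex.I)).re with hrdef
  have hr : 0 < r := hre
  clear_value ρ
  have hζr : ζ^2 * ((a:ℂ) + (b:ℂ)*Complex.I) = (r:ℂ) := by
    apply Complex.ext
    · rw [Complex.ofReal_re, hrdef]
    · rw [Complex.ofReal_im]; exact him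
  set dd : ℂ := ((a:ℂ) + (b:ℂ)*Complex.I)/2 with hdddef
  have hddre : dd.re = a/2 := by
    simp [hdddef, Complex.div_re]
  have hdd0 : dd ≠ 0 := by
    intro h
    have := congrArg Complex.re h
    rw [hddre] at this
    simp at this
    linarith only [ha, this]
  have hddn : 0 < ‖dd‖ := norm_pos_iff.2 hdd0
  clear_value dd
  have hsr : 0 < Real.sqrt r := Real.sqrt_pos.2 hr
  set Q : ℝ := (Real.sqrt 2 * ‖dd‖ + 8*‖dd‖^2/Real.sqrt r)/ρ with hQdef
  have hQ : 0 < Q := div_pos (by positivity) hρ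
  clear_value Q
  refine ⟨2*Q + 1, by linarith only [hQ], ?_⟩
  set X₀ : ℝ := (4*‖dd‖^2/Real.sqrt r + Real.sqrt 2*‖dd‖)/ρ with hX₀def
  have hX₀nn : 0 ≤ X₀ := le_of_lt (div_pos (by positivity) hρ)
  clear_value X₀
  refine ⟨max 1 (Real.sqrt X₀), lt_of_lt_of_le one_pos (le_max_left _ _), ?_⟩
  intro W hW α hα hα2 Khr hK g hg
  have hW1 : (1:ℝ) ≤ W := le_trans (le_max_left _ _) hW
  have hWpos : 0 < W := lt_of_lt_of_le one_pos hW1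
  have hcond : 4*‖dd‖^2/Real.sqrt r + Real.sqrt 2*‖dd‖ ≤ ρ * W^2 := by
    have h1 : Real.sqrt X₀ ≤ W := le_trans (le_max_right _ _) hW
    have h2 : X₀ ≤ W^2 := by
      calc X₀ = Real.sqrt X₀ ^ 2 := (Real.sq_sqrt hX₀nn).symm
        _ ≤ W^2 := pow_le_pow_left₀ (Real.sqrt_nonneg _) h1 2
    have h3 : X₀ * ρ ≤ W^2 * ρ := mul_le_mul_of_nonneg_right h2 hρ.le
    calc 4*‖dd‖^2/Real.sqrt r + Real.sqrt 2*‖dd‖ = X₀ * ρ := by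
          rw [hX₀def, div_mul_cancel₀ _ hρ.ne']
      _ ≤ W^2 * ρ := h3
      _ = ρ * W^2 := mul_comm _ _
  have hσ : 0 < ρ*W^2 := by positivity
  have hcond1 : 4*‖dd‖^2/Real.sqrt r ≤ ρ*W^2 := by
    have : 0 ≤ Real.sqrt 2*‖dd‖ := by positivity
    linarith only [hcond, this]
  have hcond2 : Real.sqrt 2 * ‖dd‖ ≤ ρ*W^2 := by
    have : 0 ≤ 4*‖dd‖^2/Real.sqrt r := by positivity
    linarith only [hcond, this]
  -- value of α
  have hα2c : ((α:ℂ))^2 = ((W^2 * r : ℝ) : ℂ) := by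
    rw [hα2, mul_assoc, hζr]; push_cast; ring
  have hαsq : α^2 = W^2 * r := by exact_mod_cast hα2c
  have hαval : α = W * Real.sqrt r := by
    rw [← Real.sqrt_sq hα.le, hαsq, Real.sqrt_mul (sq_nonneg W), Real.sqrt_sq hWpos.le]
  have hαge : Real.sqrt r ≤ α := by
    rw [hαval]; nlinarith [hsr, hW1]
  -- complex quantities
  set c : ℂ := (W:ℂ)^2 * ζ^2 with hcdef
  have hcre : c.re = W^2 * ρ := by
    rw [hcdef, show ((W:ℂ))^2 = ((W^2:ℝ):ℂ) by push_cast; ring, Complex.re_ofReal_mul, hρdef]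
  clear_value c
  set s : ℂ := c + dd + (α:ℂ) with hsdef
  clear_value s
  have hsre' : s.re = W^2*ρ + a/2 + α := by
    rw [hsdef]
    simp [Complex.add_re, hcre, hddre]
  have hW2ρ : 0 < W^2*ρ := by positivity
  have hsre : 0 < s.re := by rw [hsre']; linarith only [hW2ρ, ha, hα]
  have hs0 : s ≠ 0 := fun h => by simp [h] at hsre
  have hsabs : ρ*W^2 ≤ ‖s‖ := by
    have h1 : ρ*W^2 ≤ s.re := by rw [hsre']; linarith only [ha, hα]
    exact h1.trans (Complex.re_le_norm s)
  have hcαre : (c + (α:ℂ)).re = W^2*ρ + α := by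
    simp [Complex.add_re, hcre]
  have hcαrepos : 0 < (c + (α:ℂ)).re := by rw [hcαre]; linarith only [hW2ρ, hα]
  have hcα0 : c + (α:ℂ) ≠ 0 := fun h => by simp [h] at hcαrepos
  have hcαabs : ρ*W^2 ≤ ‖c + (α:ℂ)‖ := by
    have h1 : ρ*W^2 ≤ (c + (α:ℂ)).re := by rw [hcαre]; linarith only [hα]
    exact h1.trans (Complex.re_le_norm _)
  have habs_s_pos : 0 < ‖s‖ := norm_pos_iff.mpr hs0
  have habs_cα_pos : 0 < ‖c + (α:ℂ)‖ := norm_pos_iff.mpr hcα0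
  -- positivity of real parts of the quotients
  have hπsre : 0 < ((π:ℂ)/s).re := by
    rw [div_eq_mul_inv, Complex.re_ofReal_mul, Complex.inv_re]
    have := Complex.normSq_pos.2 hs0
    positivity
  have hπs0 : ((π:ℂ)/s) ≠ 0 := fun h => by simp [h] at hπsre
  have hπcαre : 0 < ((π:ℂ)/(c + (α:ℂ))).re := by
    rw [div_eq_mul_inv, Complex.re_ofReal_mul, Complex.inv_re]
    have := Complex.normSq_pos.2 hcα0
    positivity
  have hπcα0 : ((π:ℂ)/(c + (α:ℂ))) ≠ 0 := fun h => by simp [h] at hπcαre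
  set μ : ℂ := ((π:ℂ)/(c + (α:ℂ)))^(1/2:ℂ) with hμdef
  set ν : ℂ := ((π:ℂ)/s)^(1/2:ℂ) with hνdef
  set δ : ℂ := dd^2/s with hδdef
  set Cc : ℂ := (2*(α:ℂ)/(π:ℂ))^(1/4:ℂ) with hCcdef
  clear_value μ ν δ Cc
  -- abs values
  have habsπs : ‖(π:ℂ)/s‖ = π / ‖s‖ := by
    rw [norm_div, Complex.norm_of_nonneg Real.pi_pos.le]
  have habsπcα : ‖(π:ℂ)/(c + (α:ℂ))‖ = π / ‖c + (α:ℂ)‖ := by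
    rw [norm_div, Complex.norm_of_nonneg Real.pi_pos.le]
  have hμabs : ‖μ‖ = Real.sqrt π / Real.sqrt (‖c + (α:ℂ)‖) := by
    rw [hμdef, aux_abs_sqrt, habsπcα, Real.sqrt_div Real.pi_pos.le]
  have hμpos : 0 < ‖μ‖ := by
    rw [hμabs]; positivity
  -- bound on ‖ν - μ‖
  have hsqs : Real.sqrt (ρ*W^2) ≤ Real.sqrt (‖s‖) := Real.sqrt_le_sqrt hsabs
  have hsqcα : Real.sqrt (ρ*W^2) ≤ Real.sqrt (‖c + (α:ℂ)‖) :=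
    Real.sqrt_le_sqrt hcαabs
  have hsqσ : Real.sqrt (ρ*W^2) ^ 2 = ρ*W^2 := Real.sq_sqrt hσ.le
  have hsqσpos : 0 < Real.sqrt (ρ*W^2) := Real.sqrt_pos.2 hσ
  have hdiffq : (π:ℂ)/s - (π:ℂ)/(c + (α:ℂ)) = -((π:ℂ)*dd)/(s*(c + (α:ℂ))) := by
    rw [div_sub_div _ _ hs0 hcα0]
    congr 1
    rw [hsdef]; ring
  have hdiffn : ‖(π:ℂ)/s - (π:ℂ)/(c + (α:ℂ))‖ =
      π*‖dd‖/(‖s‖ * ‖c + (α:ℂ)‖) := by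
    rw [hdiffq, norm_div, norm_neg, norm_mul, Complex.norm_of_nonneg Real.pi_pos.le,
        norm_mul]
  have hνμ : ‖ν - μ‖ ≤ ‖μ‖ * (Real.sqrt 2 * ‖dd‖/(ρ*W^2)) := by
    have h0 := aux_sqrt_diff hπsre hπs0 hπcαre.le hπcα0
    rw [← hνdef, ← hμdef, hdiffn, habsπs] at h0
    refine h0.trans ?_
    rw [Real.sqrt_div Real.pi_pos.le, hμabs]
    exact aux_ratio _ _ _ _ habs_s_pos habs_cα_pos hσ (norm_nonneg dd) hsabs hcαabs
  have hνμ1 : ‖ν - μ‖ ≤ ‖μ‖ := by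
    refine hνμ.trans ?_
    have h1 : Real.sqrt 2 * ‖dd‖/(ρ*W^2) ≤ 1 := (div_le_one hσ).2 hcond2
    calc ‖μ‖ * (Real.sqrt 2 * ‖dd‖/(ρ*W^2)) ≤ ‖μ‖ * 1 :=
          mul_le_mul_of_nonneg_left h1 hμpos.le
      _ = ‖μ‖ := mul_one _
  have hν2 : ‖ν‖ ≤ 2*‖μ‖ := by
    have hh : ν = μ + (ν - μ) := by ring
    rw [hh]
    calc ‖μ + (ν-μ)‖ ≤ ‖μ‖ + ‖ν-μ‖ := norm_add_le _ _
      _ ≤ 2*‖μ‖ := by linarith only [hνμ1]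
  have hδn : ‖δ‖ ≤ ‖dd‖^2/(ρ*W^2) := by
    rw [hδdef, norm_div, norm_pow]
    exact div_le_div_of_nonneg_left (by positivity) hσ hsabs
  have hδα4 : ‖δ‖ ≤ α/4 := by
    have h1 : ‖dd‖^2/(ρ*W^2) ≤ Real.sqrt r/4 := by
      rw [div_le_div_iff₀ hσ (by norm_num)]
      rw [div_le_iff₀ hsr] at hcond1
      linarith only [hcond1]
    have h2 : Real.sqrt r / 4 ≤ α/4 := by linarith only [hαge]
    linarith only [hδn, h1, h2]
  -- a.e. representation of Khr g
  have hα2'' : ((α:ℂ))^2 = c * (2*dd) := by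
    rw [hα2, hcdef, hdddef]; ring
  have hKg : ∀ᵐ x : ℝ, (Khr g : ℝ → ℂ) x
      = Cc * (ν * Complex.exp (-((α:ℂ)+δ)*(x:ℂ)^2)) := by
    filter_upwards [hK g] with x hx
    rw [hx, integral_congr_ae ((hg.mono fun y hy => by rw [hy]))]
    rw [aux_integral W ζ a b α c dd s hcdef hdddef hsdef hsre hα2'' x,
      ← hCcdef, ← hνdef, ← hδdef]
  have hDiff : ((Khr g - μ • g : Hsp) : ℝ → ℂ) =ᵐ[volume]
      fun x:ℝ => Cc * Complex.exp (-(α:ℂ)*(x:ℂ)^2) * (ν * Complex.exp (-δ*(x:ℂ)^2) - μ) := by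
    filter_upwards [Lp.coeFn_sub (Khr g) (μ • g), Lp.coeFn_smul μ g, hKg, hg]
      with x h1 h2 h3 h4
    rw [h1, Pi.sub_apply, h3, h2, Pi.smul_apply, smul_eq_mul, h4]
    rw [gaussC, ← hCcdef]
    rw [show -((α:ℂ)+δ)*(x:ℂ)^2 = -(α:ℂ)*(x:ℂ)^2 + -δ*(x:ℂ)^2 by ring, Complex.exp_add]
    ring
  set T : ℝ := ‖ν - μ‖ + 8*‖μ‖*‖δ‖/α with hTdef
  clear_value T
  have hTnn : 0 ≤ T := by rw [hTdef]; positivity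
  have hnorm : ‖Khr g - μ • g‖ ≤ (‖Cc‖ * T) * Real.sqrt (Real.sqrt (π / (2*(α/2)))) := by
    refine aux_norm_le _ _ hDiff _ _ (by positivity) (by positivity) ?_
    intro x
    have := aux_ptbound Cc ν μ δ α ‖μ‖ hα hδα4 hν2 x
    rw [← hTdef] at this
    convert this using 3
  rw [show π/(2*(α/2)) = π/α by ring_nf] at hnorm
  -- value of ‖Cc‖ and the product
  have hCcn : ‖Cc‖ = Real.sqrt (Real.sqrt (2*α/π)) := by
    rw [hCcdef, show (2*(α:ℂ)/(π:ℂ)) = (((2*α/π:ℝ)):ℂ) by push_cast; ring,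
      show (1/4:ℂ) = ((1/4:ℝ):ℂ) by norm_num, Complex.norm_cpow_real,
      Complex.norm_of_nonneg (by positivity)]
    rw [show (1/4:ℝ) = 1/2*(1/2) by norm_num, Real.rpow_mul (by positivity),
      ← Real.sqrt_eq_rpow, ← Real.sqrt_eq_rpow]
  have hprod : ‖Cc‖ * Real.sqrt (Real.sqrt (π/α)) = Real.sqrt (Real.sqrt 2) := by
    rw [hCcn, ← Real.sqrt_mul (Real.sqrt_nonneg _), ← Real.sqrt_mul (by positivity)]
    rw [show (2*α/π)*(π/α) = 2 by field_simp]
  have hsq2 : Real.sqrt (Real.sqrt 2) ≤ 2 := aux_sq2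
  have h2T : ‖Khr g - μ • g‖ ≤ 2*T := by
    refine hnorm.trans ?_
    calc (‖Cc‖ * T) * Real.sqrt (Real.sqrt (π/α))
        = T * (‖Cc‖ * Real.sqrt (Real.sqrt (π/α))) := by ring
      _ = T * Real.sqrt (Real.sqrt 2) := by rw [hprod]
      _ ≤ T * 2 := mul_le_mul_of_nonneg_left hsq2 hTnn
      _ = 2*T := by ring
  -- bound on T
  have hT : T ≤ ‖μ‖ * Q / W^2 := by
    have h1 : 8*‖μ‖*‖δ‖/α ≤ 8*‖μ‖*(‖dd‖^2/(ρ*W^2))/Real.sqrt r := by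
      apply div_le_div₀ (by positivity) ?_ hsr hαge
      exact mul_le_mul_of_nonneg_left hδn (by positivity)
    have h2 : T ≤ ‖μ‖ * (Real.sqrt 2 * ‖dd‖/(ρ*W^2)) + 8*‖μ‖*(‖dd‖^2/(ρ*W^2))/Real.sqrt r := by
      rw [hTdef]; exact add_le_add hνμ h1
    refine h2.trans (le_of_eq ?_)
    rw [hQdef]
    field_simp
  -- conclusion
  have hrpow2 : W^((-2:ℝ)) = (W^2)⁻¹ := by
    rw [Real.rpow_neg hWpos.le, show ((2:ℝ)) = ((2:ℕ):ℝ) by norm_num, Real.rpow_natCast]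
  have hmono : W^((-2):ℝ) ≤ W^(-2+2*ε) := Real.rpow_le_rpow_of_exponent_le hW1 (by linarith)
  have hrpownn : 0 ≤ W^(-2+2*ε) := Real.rpow_nonneg hWpos.le _
  calc ‖Khr g - μ • g‖ ≤ 2*T := h2T
    _ ≤ 2*(‖μ‖ * Q / W^2) := by linarith only [hT]
    _ = (2*Q) * ‖μ‖ * (W^2)⁻¹ := by ring
    _ = (2*Q) * ‖μ‖ * W^((-2:ℝ)) := by rw [hrpow2]
    _ ≤ (2*Q) * ‖μ‖ * W^(-2+2*ε) := by
        apply mul_le_mul_of_nonneg_left hmono (by positivity)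
    _ ≤ (2*Q+1) * ‖μ‖ * W^(-2+2*ε) := by
        apply mul_le_mul_of_nonneg_right _ hrpownn
        exact mul_le_mul_of_nonneg_right (by linarith only []) hμpos.le
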